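/- For every integer i ≥ 5 and every integer g with g > 4i + 12, the weighted-degree-i component Q(g)_i is one-dimensional over ℚ, spanned by the (nonzero) image of the monomial a₂′^i. -/

import Mathlib

open MvPolynomial

noncomputable section

/-- The polynomial ring `ℚ[a₁, a₂′, a₃′]`. -/
abbrev R3 : Type := MvPolynomial (Fin 3) ℚ

/-- Weights: `a₁` and `a₂′` have weight 1, `a₃′` has weight 2. -/
def wt : Fin 3 → ℕ := ![1, 1, 2]

def a1 : R3 := X 0
def a2' : R3 := X 1
def a3' : R3 := X 2

/-- The relation `r₁`. -/
def r1 (g : ℤ) : R3 :=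
  C (2*(g:ℚ)^3 + 9*(g:ℚ)^2 + 10*(g:ℚ)) * a1^3
    - C (8*(g:ℚ)^2 + 24*(g:ℚ) + 8) * (a1 * a3')

/-- The relation `r₂`. -/
def r2 (g : ℤ) : R3 :=
  C (12*(g:ℚ)^3 + 42*(g:ℚ)^2 + 36*(g:ℚ)) * (a1^2 * a2')
    - C (22*(g:ℚ)^3 + 121*(g:ℚ)^2 + 187*(g:ℚ) + 66) * (a1 * a3')
    - C (24*(g:ℚ)^2 + 24*(g:ℚ)) * (a2' * a3')

/-- The relation `r₃`. -/
def r3 (g : ℤ) : R3 :=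
  C (432*(g:ℚ)^3 + 1512*(g:ℚ)^2 + 1296*(g:ℚ)) * (a1 * a2'^2)
    - C (1450*(g:ℚ)^3 + 8001*(g:ℚ)^2 + 13115*(g:ℚ) + 5442) * (a1 * a3')
    - C (1584*(g:ℚ)^3 + 5544*(g:ℚ)^2 + 3936*(g:ℚ)) * (a2' * a3')

/-- The relation `r₄`. -/
def r4 (g : ℤ) : R3 :=
  C (14344*(g:ℚ)^6 + 165692*(g:ℚ)^5 + 747682*(g:ℚ)^4 + 1636869*(g:ℚ)^3
      + 1719009*(g:ℚ)^2 + 677844*(g:ℚ) - 540) * (a1^2 * a3')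
    - C (17280*(g:ℚ)^4 + 112320*(g:ℚ)^3 + 224640*(g:ℚ)^2 + 129600*(g:ℚ)) * (a2'^2 * a3')
    + C (352*(g:ℚ)^5 + 1440*(g:ℚ)^4 + 1448*(g:ℚ)^3 + 120*(g:ℚ)^2) * (a3'^2)

/-- The ideal `I(g) = (r₁, r₂, r₃, r₄)`. -/
def Ig (g : ℤ) : Ideal R3 := Ideal.span {r1 g, r2 g, r3 g, r4 g}

/-- The quotient map `R → Q(g) = R/I(g)`, as a `ℚ`-linear map. -/
def Qmk (g : ℤ) : R3 →ₗ[ℚ] R3 ⧸ Ig g := (Ideal.Quotient.mkₐ ℚ (Ig g)).toLinearMap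

/-- `Q(g)_i`: the image in `Q(g)` of the weighted-degree-`i` homogeneous polynomials. -/
def QComp (g : ℤ) (i : ℕ) : Submodule ℚ (R3 ⧸ Ig g) :=
  (weightedHomogeneousSubmodule ℚ wt i).map (Qmk g)


/-! ### Auxiliary machinery -/

lemma Qmk_apply (g : ℤ) (x : R3) : Qmk g x = Ideal.Quotient.mk (Ig g) x := rfl

lemma hr1 (g : ℤ) : r1 g ∈ Ig g := Ideal.subset_span (by simp)
lemma hr2 (g : ℤ) : r2 g ∈ Ig g := Ideal.subset_span (by simp)
lemma hr3 (g : ℤ) : r3 g ∈ Ig g := Ideal.subset_span (by simp)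
lemma hr4 (g : ℤ) : r4 g ∈ Ig g := Ideal.subset_span (by simp)

lemma mem_of_C_mul {g : ℤ} {c : ℚ} (hc : c ≠ 0) {x : R3} (h : C c * x ∈ Ig g) :
    x ∈ Ig g := by
  have hx : x = C c⁻¹ * (C c * x) := by
    rw [← mul_assoc, ← C_mul, inv_mul_cancel₀ hc, C_1, one_mul]
  rw [hx]
  exact Ideal.mul_mem_left _ _ h

/-- abbreviations for the big coefficient polynomials -/
def D6poly (g : ℤ) : ℚ := ((746496)*(g:ℚ) + (4105728)*(g:ℚ)^2 + (8750592)*(g:ℚ)^3 + (9331200)*(g:ℚ)^4 + (5266944)*(g:ℚ)^5 + (1492992)*(g:ℚ)^6 + (165888)*(g:ℚ)^7)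
def D5poly (g : ℤ) : ℚ := ((-559872)*(g:ℚ) + (843073920)*(g:ℚ)^2 + (4901135040)*(g:ℚ)^3 + (11528171424)*(g:ℚ)^4 + (14607221184)*(g:ℚ)^5 + (11037117024)*(g:ℚ)^6 + (5134544640)*(g:ℚ)^7 + (1444697856)*(g:ℚ)^8 + (225773568)*(g:ℚ)^9 + (15054336)*(g:ℚ)^10)
def D4poly (g : ℤ) : ℚ := ((-4320)*(g:ℚ)^2 + (6458112)*(g:ℚ)^3 + (108728616)*(g:ℚ)^4 + (494328872)*(g:ℚ)^5 + (1045994280)*(g:ℚ)^6 + (1238448792)*(g:ℚ)^7 + (887175696)*(g:ℚ)^8 + (393926208)*(g:ℚ)^9 + (106179840)*(g:ℚ)^10 + (15934336)*(g:ℚ)^11 + (1022208)*(g:ℚ)^12)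
def L5poly (g : ℤ) : ℚ := ((1549922688)*(g:ℚ) + (12867921792)*(g:ℚ)^2 + (43235803872)*(g:ℚ)^3 + (77578715520)*(g:ℚ)^4 + (82927424736)*(g:ℚ)^5 + (55428489216)*(g:ℚ)^6 + (23403279168)*(g:ℚ)^7 + (6069064320)*(g:ℚ)^8 + (882959616)*(g:ℚ)^9 + (55199232)*(g:ℚ)^10)
def L4poly (g : ℤ) : ℚ := ((933120)*(g:ℚ) + (16547328)*(g:ℚ)^2 + (87780672)*(g:ℚ)^3 + (238165056)*(g:ℚ)^4 + (398523456)*(g:ℚ)^5 + (440717760)*(g:ℚ)^6 + (326166912)*(g:ℚ)^7 + (158505984)*(g:ℚ)^8 + (48190464)*(g:ℚ)^9 + (8266752)*(g:ℚ)^10 + (608256)*(g:ℚ)^11)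

lemma idG6 (g : ℤ) :
    C (D6poly g) * (a1^0 * a2'^3 * a3'^1) =
      (C ((256608) + (686880)*(g:ℚ) + (323667144)*(g:ℚ)^2 + (926276328)*(g:ℚ)^3 + (1016615520)*(g:ℚ)^4 + (537698304)*(g:ℚ)^5 + (137922048)*(g:ℚ)^6 + (13799808)*(g:ℚ)^7) * (a1^0 * a2'^2 * a3'^0) + C ((-587736) + (886162896)*(g:ℚ) + (3440915658)*(g:ℚ)^2 + (5060442054)*(g:ℚ)^3 + (3731379816)*(g:ℚ)^4 + (1481405568)*(g:ℚ)^5 + (303561024)*(g:ℚ)^6 + (25264800)*(g:ℚ)^7) * (a1^1 * a2'^1 * a3'^0)) * r1 g + (C ((-31104) + (-139968)*(g:ℚ) + (-224640)*(g:ℚ)^2 + (-164160)*(g:ℚ)^3 + (-55296)*(g:ℚ)^4 + (-6912)*(g:ℚ)^5) * (a1^0 * a2'^2 * a3'^0) + C ((-107633520)*(g:ℚ) + (-524063928)*(g:ℚ)^2 + (-848727168)*(g:ℚ)^3 + (-656113584)*(g:ℚ)^4 + (-266634720)*(g:ℚ)^5 + (-55180224)*(g:ℚ)^6 + (-4599936)*(g:ℚ)^7)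 * (a1^1 * a2'^1 * a3'^0) + C ((163260) + (-246199896)*(g:ℚ) + (-890139185)*(g:ℚ)^2 + (-1194576187)*(g:ℚ)^3 + (-802381608)*(g:ℚ)^4 + (-291178232)*(g:ℚ)^5 + (-54804304)*(g:ℚ)^6 + (-4210800)*(g:ℚ)^7) * (a1^2 * a2'^0 * a3'^0)) * r2 g + (C ((864) + (3888)*(g:ℚ) + (6240)*(g:ℚ)^2 + (4560)*(g:ℚ)^3 + (1536)*(g:ℚ)^4 + (192)*(g:ℚ)^5) * (a1^1 * a2'^1 * a3'^0) + C ((-1980) + (2985048)*(g:ℚ) + (12060961)*(g:ℚ)^2 + (17093835)*(g:ℚ)^3 + (11843524)*(g:ℚ)^4 + (4374480)*(g:ℚ)^5 + (830368)*(g:ℚ)^6 + (63888)*(g:ℚ)^7) * (a1^2 * a2'^0 * a3'^0)) * r3 g := by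
  simp only [D6poly]
  simp only [r1, r2, r3, r4, a1, a2', a3', map_add, map_sub, map_mul, map_pow, map_ofNat,
    map_one, map_neg]
  ring_nf

lemma idG5 (g : ℤ) :
    C (D5poly g) * (a1^1 * a2'^3 * a3'^0) - C (L5poly g) * (a1^0 * a2'^2 * a3'^1) =
      (C ((-533076552) + (-2924770248)*(g:ℚ) + (-6376473882)*(g:ℚ)^2 + (-7170697848)*(g:ℚ)^3 + (-4544667378)*(g:ℚ)^4 + (-1642246212)*(g:ℚ)^5 + (-316279800)*(g:ℚ)^6 + (-25230000)*(g:ℚ)^7) * (a1^0 * a2'^1 * a3'^0)) * r1 g + (C ((64650960) + (364844304)*(g:ℚ) + (790623108)*(g:ℚ)^2 + (855746496)*(g:ℚ)^3 + (512498052)*(g:ℚ)^4 + (173266632)*(g:ℚ)^5 + (31047984)*(g:ℚ)^6 + (2296800)*(g:ℚ)^7) * (a1^0 * a2'^1 * a3'^0) + C ((148076820) + (772949028)*(g:ℚ) + (1580917865)*(g:ℚ)^2 + (1646412368)*(g:ℚ)^3 + (961543565)*(g:ℚ)^4 + (320113502)*(g:ℚ)^5 + (56918300)*(g:ℚ)^6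 + (4205000)*(g:ℚ)^7) * (a1^1 * a2'^0 * a3'^0)) * r2 g + (C ((-432) + (651024)*(g:ℚ) + (3022356)*(g:ℚ)^2 + (5152104)*(g:ℚ)^3 + (4252764)*(g:ℚ)^4 + (1837368)*(g:ℚ)^5 + (400656)*(g:ℚ)^6 + (34848)*(g:ℚ)^7) * (a1^0 * a2'^1 * a3'^0) + C ((-1795860) + (-10134564)*(g:ℚ) + (-21961753)*(g:ℚ)^2 + (-23770736)*(g:ℚ)^3 + (-14236057)*(g:ℚ)^4 + (-4812962)*(g:ℚ)^5 + (-862444)*(g:ℚ)^6 + (-63800)*(g:ℚ)^7) * (a1^1 * a2'^0 * a3'^0)) * r3 g := by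
  simp only [D5poly, L5poly]
  simp only [r1, r2, r3, r4, a1, a2', a3', map_add, map_sub, map_mul, map_pow, map_ofNat,
    map_one, map_neg]
  ring_nf

lemma idG4 (g : ℤ) :
    C (D4poly g) * (a1^0 * a2'^0 * a3'^2) - C (L4poly g) * (a1^0 * a2'^2 * a3'^1) =
      (C ((-1924560) + (2412288216)*(g:ℚ) + (10579435596)*(g:ℚ)^2 + (17816307102)*(g:ℚ)^3 + (13551913440)*(g:ℚ)^4 + (2541364362)*(g:ℚ)^5 + (-3352787868)*(g:ℚ)^6 + (-2810640912)*(g:ℚ)^7 + (-971303520)*(g:ℚ)^8 + (-165309408)*(g:ℚ)^9 + (-11360448)*(g:ℚ)^10) * (a1^0 * a2'^1 * a3'^0)) * r1 g + (C ((233280) + (-292167648)*(g:ℚ) + (-1571865264)*(g:ℚ)^2 + (-3347969112)*(g:ℚ)^3 + (-3785590944)*(g:ℚ)^4 + (-2530679256)*(g:ℚ)^5 + (-1036876896)*(g:ℚ)^6 + (-256451328)*(g:ℚ)^7 + (-35220096)*(g:ℚ)^8 + (-2065536)*(g:ℚ)^9) * (a1^0 * a2'^1 * a3'^0) + C ((534600)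 + (-670222620)*(g:ℚ) + (-2759949054)*(g:ℚ)^2 + (-4284501003)*(g:ℚ)^3 + (-2887676076)*(g:ℚ)^4 + (-286585321)*(g:ℚ)^5 + (840013026)*(g:ℚ)^6 + (593256888)*(g:ℚ)^7 + (186595376)*(g:ℚ)^8 + (29444976)*(g:ℚ)^9 + (1893408)*(g:ℚ)^10) * (a1^1 * a2'^0 * a3'^0)) * r2 g + (C ((-6480) + (8115768)*(g:ℚ) + (43662924)*(g:ℚ)^2 + (92999142)*(g:ℚ)^3 + (105155304)*(g:ℚ)^4 + (70296646)*(g:ℚ)^5 + (28802136)*(g:ℚ)^6 + (7123648)*(g:ℚ)^7 + (978336)*(g:ℚ)^8 + (57376)*(g:ℚ)^9) * (a1^1 * a2'^0 * a3'^0)) * r3 g + (C ((-36) + (54252)*(g:ℚ) + (251863)*(g:ℚ)^2 + (429342)*(g:ℚ)^3 + (354397)*(g:ℚ)^4 + (153114)*(g:ℚ)^5 + (33388)*(g:ℚ)^6 + (2904)*(g:ℚ)^7) * (a1^0 * a2'^0 * a3'^0)) * r4 g := by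
  simp only [D4poly, L4poly]
  simp only [r1, r2, r3, r4, a1, a2', a3', map_add, map_sub, map_mul, map_pow, map_ofNat,
    map_one, map_neg]
  ring_nf

lemma hD6ne (g : ℤ) (hg : 33 ≤ g) : D6poly g ≠ 0 := by
  rw [D6poly]
  have h33 : (33:ℚ) ≤ (g:ℚ) := by exact_mod_cast hg
  have hu : (0:ℚ) ≤ (g:ℚ) - 33 := by linarith
  have hpos : (0:ℚ) < ((746496)*(g:ℚ) + (4105728)*(g:ℚ)^2 + (8750592)*(g:ℚ)^3 + (9331200)*(g:ℚ)^4 + (5266944)*(g:ℚ)^5 + (1492992)*(g:ℚ)^6 + (165888)*(g:ℚ)^7) := by nlinarith [hu, pow_nonneg hu 2, pow_nonneg hu 3, pow_nonneg hu 4, pow_nonneg hu 5, pow_nonneg hu 6, pow_nonneg hu 7]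
  exact ne_of_gt hpos

lemma hD5ne (g : ℤ) (hg : 33 ≤ g) : D5poly g ≠ 0 := by
  rw [D5poly]
  have h33 : (33:ℚ) ≤ (g:ℚ) := by exact_mod_cast hg
  have hu : (0:ℚ) ≤ (g:ℚ) - 33 := by linarith
  have hpos : (0:ℚ) < ((-559872)*(g:ℚ) + (843073920)*(g:ℚ)^2 + (4901135040)*(g:ℚ)^3 + (11528171424)*(g:ℚ)^4 + (14607221184)*(g:ℚ)^5 + (11037117024)*(g:ℚ)^6 + (5134544640)*(g:ℚ)^7 + (1444697856)*(g:ℚ)^8 + (225773568)*(g:ℚ)^9 + (15054336)*(g:ℚ)^10) := by nlinarith [hu, pow_nonneg hu 2, pow_nonneg hu 3, pow_nonneg hu 4, pow_nonneg hu 5, pow_nonneg hu 6, pow_nonneg hu 7, pow_nonneg hu 8, pow_nonneg hu 9, pow_nonneg hu 10]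
  exact ne_of_gt hpos

lemma hD4ne (g : ℤ) (hg : 33 ≤ g) : D4poly g ≠ 0 := by
  rw [D4poly]
  have h33 : (33:ℚ) ≤ (g:ℚ) := by exact_mod_cast hg
  have hu : (0:ℚ) ≤ (g:ℚ) - 33 := by linarith
  have hpos : (0:ℚ) < ((-4320)*(g:ℚ)^2 + (6458112)*(g:ℚ)^3 + (108728616)*(g:ℚ)^4 + (494328872)*(g:ℚ)^5 + (1045994280)*(g:ℚ)^6 + (1238448792)*(g:ℚ)^7 + (887175696)*(g:ℚ)^8 + (393926208)*(g:ℚ)^9 + (106179840)*(g:ℚ)^10 + (15934336)*(g:ℚ)^11 + (1022208)*(g:ℚ)^12) := by nlinarith [hu, pow_nonneg hu 2, pow_nonneg hu 3, pow_nonneg hu 4, pow_nonneg hu 5, pow_nonneg hu 6, pow_nonneg hu 7, pow_nonneg hu 8, pow_nonneg hu 9, pow_nonneg hu 10, pow_nonneg hu 11, pow_nonneg hu 12]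
  exact ne_of_gt hpos

lemma hAne (g : ℤ) (hg : 33 ≤ g) : ((5442) + (13115)*(g:ℚ) + (8001)*(g:ℚ)^2 + (1450)*(g:ℚ)^3) ≠ 0 := by
  have h33 : (33:ℚ) ≤ (g:ℚ) := by exact_mod_cast hg
  have hu : (0:ℚ) ≤ (g:ℚ) - 33 := by linarith
  have hpos : (0:ℚ) < ((5442) + (13115)*(g:ℚ) + (8001)*(g:ℚ)^2 + (1450)*(g:ℚ)^3) := by nlinarith [hu, pow_nonneg hu 2, pow_nonneg hu 3]
  exact ne_of_gt hpos

lemma hB1ne (g : ℤ) (hg : 33 ≤ g) : ((10)*(g:ℚ) + (9)*(g:ℚ)^2 + (2)*(g:ℚ)^3) ≠ 0 := by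
  have h33 : (33:ℚ) ≤ (g:ℚ) := by exact_mod_cast hg
  have hu : (0:ℚ) ≤ (g:ℚ) - 33 := by linarith
  have hpos : (0:ℚ) < ((10)*(g:ℚ) + (9)*(g:ℚ)^2 + (2)*(g:ℚ)^3) := by nlinarith [hu, pow_nonneg hu 2, pow_nonneg hu 3]
  exact ne_of_gt hpos

lemma hC1ne (g : ℤ) (hg : 33 ≤ g) : ((36)*(g:ℚ) + (42)*(g:ℚ)^2 + (12)*(g:ℚ)^3) ≠ 0 := by
  have h33 : (33:ℚ) ≤ (g:ℚ) := by exact_mod_cast hg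
  have hu : (0:ℚ) ≤ (g:ℚ) - 33 := by linarith
  have hpos : (0:ℚ) < ((36)*(g:ℚ) + (42)*(g:ℚ)^2 + (12)*(g:ℚ)^3) := by nlinarith [hu, pow_nonneg hu 2, pow_nonneg hu 3]
  exact ne_of_gt hpos



/-! ### Small-degree rewriting identities -/

lemma idA (g : ℤ) (p q s : ℕ) :
    C ((5442) + (13115)*(g:ℚ) + (8001)*(g:ℚ)^2 + (1450)*(g:ℚ)^3) * (a1^(p+1) * a2'^q * a3'^(s+1)) =
      C (432*(g:ℚ)^3 + 1512*(g:ℚ)^2 + 1296*(g:ℚ)) * (a1^(p+1) * a2'^(q+2) * a3'^s)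
      - C (1584*(g:ℚ)^3 + 5544*(g:ℚ)^2 + 3936*(g:ℚ)) * (a1^p * a2'^(q+1) * a3'^(s+1))
      - (a1^p * a2'^q * a3'^s) * r3 g := by
  simp only [r3, a1, a2', a3']; ring_nf

lemma idB (g : ℤ) (p q : ℕ) :
    C ((10)*(g:ℚ) + (9)*(g:ℚ)^2 + (2)*(g:ℚ)^3) * (a1^(p+3) * a2'^q * a3'^0) =
      (a1^p * a2'^q * a3'^0) * r1 g
      + C (8*(g:ℚ)^2 + 24*(g:ℚ) + 8) * (a1^(p+1) * a2'^q * a3'^1) := by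
  simp only [r1, a1, a2', a3']; ring_nf

lemma idC (g : ℤ) (q : ℕ) :
    C ((36)*(g:ℚ) + (42)*(g:ℚ)^2 + (12)*(g:ℚ)^3) * (a1^2 * a2'^(q+1) * a3'^0) =
      (a1^0 * a2'^q * a3'^0) * r2 g
      + C (22*(g:ℚ)^3 + 121*(g:ℚ)^2 + 187*(g:ℚ) + 66) * (a1^1 * a2'^q * a3'^1)
      + C (24*(g:ℚ)^2 + 24*(g:ℚ)) * (a1^0 * a2'^(q+1) * a3'^1) := by
  simp only [r2, a1, a2', a3']; ring_nf

/-! ### Every weighted-degree `≥ 5` monomial other than a power of `a2'` lies in `Ig g` -/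

lemma memG6 (g : ℤ) (hg : 33 ≤ g) : a1^0 * a2'^3 * a3'^1 ∈ Ig g := by
  refine mem_of_C_mul (hD6ne g hg) ?_
  rw [idG6]
  exact add_mem (add_mem (Ideal.mul_mem_left _ _ (hr1 g)) (Ideal.mul_mem_left _ _ (hr2 g)))
    (Ideal.mul_mem_left _ _ (hr3 g))

lemma mono_mem (g : ℤ) (hg : 33 ≤ g) :
    ∀ n p q s : ℕ, 2*p + s ≤ n → 5 ≤ p + q + 2*s → 1 ≤ p + s →
      a1^p * a2'^q * a3'^s ∈ Ig g := by
  intro n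
  induction n with
  | zero => intro p q s h1 _ h3; omega
  | succ n IH =>
    intro p q s hmu hdeg hps
    by_cases hs : 1 ≤ s
    · by_cases hp : 1 ≤ p
      · -- Rule A
        obtain ⟨p', rfl⟩ : ∃ k, p = k + 1 := ⟨p - 1, by omega⟩
        obtain ⟨s', rfl⟩ : ∃ k, s = k + 1 := ⟨s - 1, by omega⟩
        refine mem_of_C_mul (hAne g hg) ?_
        rw [idA]
        refine sub_mem (sub_mem ?_ ?_) (Ideal.mul_mem_left _ _ (hr3 g))
        · exact Ideal.mul_mem_left _ _ (IH (p'+1) (q+2) s' (by omega) (by omega) (by omega))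
        · exact Ideal.mul_mem_left _ _ (IH p' (q+1) (s'+1) (by omega) (by omega) (by omega))
      · -- p = 0
        obtain rfl : p = 0 := by omega
        by_cases hq : 3 ≤ q
        · -- Rule E
          obtain ⟨q', rfl⟩ : ∃ k, q = k + 3 := ⟨q - 3, by omega⟩
          obtain ⟨s', rfl⟩ : ∃ k, s = k + 1 := ⟨s - 1, by omega⟩
          have h : a1^0 * a2'^(q'+3) * a3'^(s'+1) =
              (a2'^q' * a3'^s') * (a1^0 * a2'^3 * a3'^1) := by ring
          rw [h]
          exact Ideal.mul_mem_left _ _ (memG6 g hg)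
        · -- Rule F
          obtain ⟨s', rfl⟩ : ∃ k, s = k + 2 := ⟨s - 2, by omega⟩
          refine mem_of_C_mul (hD4ne g hg) ?_
          have h : C (D4poly g) * (a1^0 * a2'^q * a3'^(s'+2)) =
              (a2'^q * a3'^s') *
                (C (D4poly g) * (a1^0 * a2'^0 * a3'^2) - C (L4poly g) * (a1^0 * a2'^2 * a3'^1))
              + C (L4poly g) * (a1^0 * a2'^(q+2) * a3'^(s'+1)) := by
            simp only [a1, a2', a3']; ring
          rw [h, idG4]
          refine add_mem (Ideal.mul_mem_left _ _ ?_) ?_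
          · exact add_mem (add_mem (add_mem (Ideal.mul_mem_left _ _ (hr1 g))
              (Ideal.mul_mem_left _ _ (hr2 g))) (Ideal.mul_mem_left _ _ (hr3 g)))
              (Ideal.mul_mem_left _ _ (hr4 g))
          · exact Ideal.mul_mem_left _ _ (IH 0 (q+2) (s'+1) (by omega) (by omega) (by omega))
    · -- s = 0
      obtain rfl : s = 0 := by omega
      by_cases hp3 : 3 ≤ p
      · -- Rule B
        obtain ⟨p', rfl⟩ : ∃ k, p = k + 3 := ⟨p - 3, by omega⟩
        refine mem_of_C_mul (hB1ne g hg) ?_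
        rw [idB]
        refine add_mem (Ideal.mul_mem_left _ _ (hr1 g)) ?_
        exact Ideal.mul_mem_left _ _ (IH (p'+1) q 1 (by omega) (by omega) (by omega))
      · by_cases hp2 : p = 2
        · -- Rule C
          subst hp2
          obtain ⟨q', rfl⟩ : ∃ k, q = k + 1 := ⟨q - 1, by omega⟩
          refine mem_of_C_mul (hC1ne g hg) ?_
          rw [idC]
          refine add_mem (add_mem (Ideal.mul_mem_left _ _ (hr2 g)) ?_) ?_
          · exact Ideal.mul_mem_left _ _ (IH 1 q' 1 (by omega) (by omega) (by omega))
          · exact Ideal.mul_mem_left _ _ (IH 0 (q'+1) 1 (by omega) (by omega) (by omega))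
        · -- Rule D : p = 1
          obtain rfl : p = 1 := by omega
          obtain ⟨q', rfl⟩ : ∃ k, q = k + 4 := ⟨q - 4, by omega⟩
          refine mem_of_C_mul (hD5ne g hg) ?_
          have h : C (D5poly g) * (a1^1 * a2'^(q'+4) * a3'^0) =
              a2'^(q'+1) *
                (C (D5poly g) * (a1^1 * a2'^3 * a3'^0) - C (L5poly g) * (a1^0 * a2'^2 * a3'^1))
              + C (L5poly g) * (a1^0 * a2'^(q'+3) * a3'^1) := by
            simp only [a1, a2', a3']; ring
          rw [h, idG5]
          refine add_mem (Ideal.mul_mem_left _ _ ?_) ?_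
          · exact add_mem (add_mem (Ideal.mul_mem_left _ _ (hr1 g))
              (Ideal.mul_mem_left _ _ (hr2 g))) (Ideal.mul_mem_left _ _ (hr3 g))
          · exact Ideal.mul_mem_left _ _ (IH 0 (q'+3) 1 (by omega) (by omega) (by omega))

/-! ### Spanning -/

lemma weight_wt (v : Fin 3 →₀ ℕ) : Finsupp.weight wt v = v 0 + v 1 + 2 * v 2 := by
  rw [Finsupp.weight_apply, Finsupp.sum_fintype]
  · simp [Fin.sum_univ_three, wt, smul_eq_mul]
    ring
  · intro i; simp

lemma mono_expand (v : Fin 3 →₀ ℕ) (c : ℚ) :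
    (monomial v c : R3) = C c * (a1^(v 0) * a2'^(v 1) * a3'^(v 2)) := by
  rw [monomial_eq]
  simp only [a1, a2', a3']
  rw [Finsupp.prod_fintype]
  · rw [Fin.prod_univ_three]
  · intro i; simp

lemma Qmk_mem_zero {g : ℤ} {x : R3} (hx : x ∈ Ig g) : Qmk g x = 0 := by
  rw [Qmk_apply, Ideal.Quotient.eq_zero_iff_mem]
  exact hx

lemma span_deg (g : ℤ) (hg : 33 ≤ g) {i : ℕ} (hi : 5 ≤ i) {f : R3}
    (hf : f ∈ weightedHomogeneousSubmodule ℚ wt i) :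
    Qmk g f ∈ Submodule.span ℚ {Qmk g (a2'^i)} := by
  rw [mem_weightedHomogeneousSubmodule] at hf
  have heq : (Qmk g) f = ∑ v ∈ f.support, (Qmk g) (monomial v (coeff v f)) := by
    conv_lhs => rw [f.as_sum]
    exact map_sum _ _ _
  rw [heq]
  apply Submodule.sum_mem
  intro v hv
  have hw : v 0 + v 1 + 2 * v 2 = i := by
    have h := hf (mem_support_iff.mp hv)
    rwa [weight_wt] at h
  rw [mono_expand]
  by_cases h0 : v 0 + v 2 = 0
  · have h1 : v 1 = i := by omega
    have he : a1^(v 0) * a2'^(v 1) * a3'^(v 2) = a2'^i := by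
      rw [show v 0 = 0 by omega, show v 2 = 0 by omega, h1]
      ring
    rw [he, ← smul_eq_C_mul, map_smul]
    exact Submodule.smul_mem _ _ (Submodule.mem_span_singleton_self _)
  · have hm : a1^(v 0) * a2'^(v 1) * a3'^(v 2) ∈ Ig g :=
      mono_mem g hg (2*(v 0)+(v 2)) (v 0) (v 1) (v 2) le_rfl (by omega) (by omega)
    rw [Qmk_mem_zero (Ideal.mul_mem_left _ _ hm)]
    exact Submodule.zero_mem _

/-! ### Nonvanishing of the image of `a2'^i` -/

lemma a2pow_ne (g : ℤ) (i : ℕ) : Qmk g (a2'^i) ≠ 0 := by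
  rw [Qmk_apply, Ne, Ideal.Quotient.eq_zero_iff_mem]
  intro hmem
  have hker : Ig g ≤ RingHom.ker (aeval ![0,1,0] : R3 →ₐ[ℚ] ℚ).toRingHom := by
    rw [Ig, Ideal.span_le]
    intro x hx
    simp only [Set.mem_insert_iff, Set.mem_singleton_iff] at hx
    rcases hx with rfl | rfl | rfl | rfl <;>
      · simp only [SetLike.mem_coe, RingHom.mem_ker, AlgHom.toRingHom_eq_coe,
          RingHom.coe_coe, r1, r2, r3, r4, a1, a2', a3', map_add, map_sub, map_mul, map_pow,
          aeval_C, aeval_X]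
        norm_num [Matrix.cons_val_two, Matrix.tail_cons, Matrix.head_cons]
  have h1 := hker hmem
  rw [RingHom.mem_ker] at h1
  simp only [AlgHom.toRingHom_eq_coe, RingHom.coe_coe, a2', map_pow, aeval_X] at h1
  norm_num at h1


/-- For `i ≥ 5` and `g > 4i + 12`, the component `Q(g)_i` is one-dimensional,
spanned by the nonzero image of `a₂′^i`. -/
theorem QComp_high_degree (i : ℕ) (hi : 5 ≤ i) (g : ℤ) (hg : g > 4 * (i : ℤ) + 12) :
    Qmk g (a2'^i) ≠ 0 ∧
    QComp g i = Submodule.span ℚ {Qmk g (a2'^i)} ∧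
    Module.finrank ℚ (QComp g i) = 1 := by
  have hi5 : (5:ℤ) ≤ (i:ℤ) := by exact_mod_cast hi
  have hg33 : (33:ℤ) ≤ g := by omega
  have hne : Qmk g (a2'^i) ≠ 0 := a2pow_ne g i
  have hspan : QComp g i = Submodule.span ℚ {Qmk g (a2'^i)} := by
    apply le_antisymm
    · rintro x hx
      obtain ⟨f, hf, rfl⟩ := Submodule.mem_map.mp hx
      exact span_deg g hg33 hi hf
    · rw [Submodule.span_le, Set.singleton_subset_iff]
      refine Submodule.mem_map_of_mem ?_
      rw [mem_weightedHomogeneousSubmodule, a2', X_pow_eq_monomial]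
      apply isWeightedHomogeneous_monomial
      rw [weight_wt]
      simp
  refine ⟨hne, hspan, ?_⟩
  rw [hspan]
  exact finrank_span_singleton hne
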